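/- Let N ∼ Poisson(μ) and, given N = K, let U_1, …, U_K be i.i.d. Uniform(0,t), all independent of a bounded measurable function path s ↦ f(s) on [0,t] with f(s) ≤ b for all s. Then E[ e^{(μ−bt)} μ^{−N} ∏_{l=1}^{N} (b − f(U_l)) · t^N ] = exp(−∫_0^t f(s) ds). -/

import Mathlib

open MeasureTheory ProbabilityTheory Finset

/-- Lintegral of a finite product of independent nonnegative random variables. -/
lemma lintegral_prod_range_of_iIndepFun {Ω : Type*} [MeasurableSpace Ω] (μ : Measure Ω)
    [IsProbabilityMeasure μ]
    (W : ℕ → Ω → ENNReal) (hW : ∀ l, Measurable (W l))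
    (hind : iIndepFun W μ) (n : ℕ) :
    ∫⁻ ω, ∏ l ∈ range n, W l ω ∂μ = ∏ l ∈ range n, ∫⁻ ω, W l ω ∂μ := by
  induction n with
  | zero => simp
  | succ n ih =>
    have h := hind.indepFun_prod_range_succ hW n
    have hfn : (∏ j ∈ range n, W j) = fun ω => ∏ j ∈ range n, W j ω := by
      funext ω; simp
    rw [hfn] at h
    have hmul := lintegral_mul_eq_lintegral_mul_lintegral_of_indepFun
      (μ := μ) (f := fun ω => ∏ j ∈ range n, W j ω) (g := W n)
      (Finset.measurable_prod _ fun i _ => hW i) (hW n) h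
    simp only [prod_range_succ, ← ih]
    simpa [Pi.mul_apply] using hmul

/-- The Poisson estimator identity (eq. is7): with `N ∼ Poisson(μpar)`, i.i.d.
`U_l ∼ Uniform(0,t)` independent of `N`, and a bounded measurable `f ≤ b`,
`E[ e^{μpar−bt} ∏_{l<N} (t/μpar)(b − f(U_l)) ] = exp(−∫_0^t f(s) ds)`. -/
theorem poisson_estimator
    {Ω : Type*} [MeasurableSpace Ω] (μ : Measure Ω) [IsProbabilityMeasure μ]
    (t : ℝ) (ht : 0 < t) (μpar : ℝ) (hμ : 0 < μpar)
    (b c : ℝ) (f : ℝ → ℝ) (hfmeas : Measurable f)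
    (hfb : ∀ s, f s ≤ b) (hfc : ∀ s, c ≤ f s)
    (N : Ω → ℕ) (U : ℕ → Ω → ℝ)
    (hNmeas : Measurable N) (hUmeas : ∀ l, Measurable (U l))
    (hNlaw : Measure.map N μ = poissonMeasure μpar.toNNReal)
    (hUlaw : ∀ l, Measure.map (U l) μ
      = (ENNReal.ofReal t)⁻¹ • volume.restrict (Set.Icc (0 : ℝ) t))
    (hUiid : iIndepFun U μ)
    (hNU : IndepFun N (fun ω => fun l => U l ω) μ) :
    ∫ ω, Real.exp (μpar - b * t) * ∏ l ∈ range (N ω), (t / μpar) * (b - f (U l ω)) ∂μ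
      = Real.exp (-∫ s in (0 : ℝ)..t, f s) := by
  -- Notation
  set I : ℝ := ∫ s in (0 : ℝ)..t, f s with hI
  set g : ℝ → ℝ := fun s => (t / μpar) * (b - f s) with hg
  have hgmeas : Measurable g := (measurable_const.mul (measurable_const.sub hfmeas))
  have hg0 : ∀ s, 0 ≤ g s := fun s =>
    mul_nonneg (div_nonneg ht.le hμ.le) (sub_nonneg.mpr (hfb s))
  have hgC : ∀ s, g s ≤ (t / μpar) * (b - c) := fun s =>
    mul_le_mul_of_nonneg_left (by linarith [hfc s]) (div_nonneg ht.le hμ.le)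
  -- interval integrability of f
  have hfint : IntervalIntegrable f volume 0 t := by
    rw [intervalIntegrable_iff]
    refine Measure.integrableOn_of_bounded (M := max |b| |c|) measure_Ioc_lt_top.ne
      hfmeas.aestronglyMeasurable (ae_of_all _ fun x => ?_)
    rw [Real.norm_eq_abs, abs_le]
    refine ⟨?_, ?_⟩
    · have h1 : -(max |b| |c|) ≤ -|c| := neg_le_neg (le_max_right _ _)
      have h2 : -|c| ≤ c := neg_abs_le c
      linarith [hfc x]
    · have h2 : b ≤ |b| := le_abs_self b
      have h3 : |b| ≤ max |b| |c| := le_max_left _ _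
      linarith [hfb x]
  -- I ≤ b * t
  have hIle : I ≤ b * t := by
    have := intervalIntegral.integral_mono_on ht.le hfint intervalIntegrable_const
      (fun s _ => hfb s)
    simpa [mul_comm] using this
  -- a := (b*t - I)/μpar ≥ 0
  set a : ℝ := (b * t - I) / μpar with ha
  have ha0 : 0 ≤ a := div_nonneg (by linarith) hμ.le
  -- W l := ofReal ∘ g ∘ U l
  set W : ℕ → Ω → ENNReal := fun l ω => ENNReal.ofReal (g (U l ω)) with hW
  have hWmeas : ∀ l, Measurable (W l) := fun l =>
    ENNReal.measurable_ofReal.comp (hgmeas.comp (hUmeas l))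
  have hWind : iIndepFun W μ :=
    hUiid.comp (fun _ x => ENNReal.ofReal (g x))
      (fun _ => ENNReal.measurable_ofReal.comp hgmeas)
  -- ∫⁻ W l = ofReal a
  have hWint : ∀ l, ∫⁻ ω, W l ω ∂μ = ENNReal.ofReal a := by
    intro l
    have h1 : ∫⁻ ω, W l ω ∂μ
        = ∫⁻ x, ENNReal.ofReal (g x) ∂(Measure.map (U l) μ) :=
      (lintegral_map (ENNReal.measurable_ofReal.comp hgmeas) (hUmeas l)).symm
    rw [h1, hUlaw l, lintegral_smul_measure]
    have hginteg : Integrable g (volume.restrict (Set.Icc (0 : ℝ) t)) := by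
      refine ⟨hgmeas.aestronglyMeasurable, ?_⟩
      refine HasFiniteIntegral.restrict_of_bounded (C := (t / μpar) * (b - c))
        (measure_Icc_lt_top) ?_
      exact ae_of_all _ fun x => by
        rw [Real.norm_eq_abs, abs_of_nonneg (hg0 x)]; exact hgC x
    have h2 : ∫⁻ x in Set.Icc (0 : ℝ) t, ENNReal.ofReal (g x)
        = ENNReal.ofReal (∫ x in Set.Icc (0 : ℝ) t, g x) :=
      (ofReal_integral_eq_lintegral_ofReal hginteg (ae_of_all _ hg0)).symm
    have h3 : ∫ x in Set.Icc (0 : ℝ) t, g x = (t / μpar) * (b * t - I) := by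
      rw [MeasureTheory.integral_Icc_eq_integral_Ioc,
        ← intervalIntegral.integral_of_le ht.le]
      have : ∫ x in (0 : ℝ)..t, g x
          = (t / μpar) * ∫ x in (0 : ℝ)..t, (b - f x) := by
        simp [hg, intervalIntegral.integral_const_mul]
      rw [this, intervalIntegral.integral_sub intervalIntegrable_const hfint]
      simp [mul_comm, ← hI]
    rw [h2, h3]
    have ht0 : ENNReal.ofReal t ≠ 0 := by
      simp [ENNReal.ofReal_eq_zero, not_le, ht]
    have hta : (t / μpar) * (b * t - I) = t * a := by
      rw [ha]; field_simp
    rw [hta, ENNReal.ofReal_mul ht.le, smul_eq_mul, ← mul_assoc,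
      ENNReal.inv_mul_cancel ht0 ENNReal.ofReal_ne_top, one_mul]
  -- measurability of the random product
  have hprodmeas : ∀ k, Measurable fun ω => ∏ l ∈ range k, W l ω := fun k =>
    Finset.measurable_prod _ fun l _ => hWmeas l
  -- the key lintegral computation
  have hL : ∫⁻ ω, ∏ l ∈ range (N ω), W l ω ∂μ
      = ∑' k : ℕ, ENNReal.ofReal (poissonPMFReal μpar.toNNReal k) * (ENNReal.ofReal a) ^ k := by
    have hpt : ∀ ω, ∏ l ∈ range (N ω), W l ω
        = ∑' k : ℕ, Set.indicator {ω' | N ω' = k} (fun ω' => ∏ l ∈ range k, W l ω') ω := by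
      intro ω
      rw [tsum_eq_single (N ω) (fun k hk => by
        simp [Set.indicator, Set.mem_setOf_eq, (Ne.symm hk : ¬ N ω = k)])]
      simp [Set.indicator, Set.mem_setOf_eq]
    have hAmeas : ∀ k : ℕ, MeasurableSet {ω' | N ω' = k} := fun k =>
      hNmeas (measurableSet_singleton k)
    calc ∫⁻ ω, ∏ l ∈ range (N ω), W l ω ∂μ
        = ∫⁻ ω, ∑' k : ℕ, Set.indicator {ω' | N ω' = k}
            (fun ω' => ∏ l ∈ range k, W l ω') ω ∂μ := by
          exact lintegral_congr hpt
      _ = ∑' k : ℕ, ∫⁻ ω, Set.indicator {ω' | N ω' = k}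
            (fun ω' => ∏ l ∈ range k, W l ω') ω ∂μ := by
          exact lintegral_tsum fun k =>
            ((hprodmeas k).indicator (hAmeas k)).aemeasurable
      _ = ∑' k : ℕ, ENNReal.ofReal (poissonPMFReal μpar.toNNReal k)
            * (ENNReal.ofReal a) ^ k := by
          congr 1
          funext k
          -- split indicator as product of indicator of N and product of W's
          have hsplit : ∀ ω, Set.indicator {ω' | N ω' = k}
              (fun ω' => ∏ l ∈ range k, W l ω') ω
              = (Set.indicator ({k} : Set ℕ) (1 : ℕ → ENNReal) (N ω))
                * ∏ l ∈ range k, W l ω := by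
            intro ω
            by_cases h : N ω = k <;>
              simp [Set.indicator, Set.mem_setOf_eq, h]
          rw [lintegral_congr hsplit]
          -- independence of the two factors
          have hψ : Measurable fun u : ℕ → ℝ => ∏ l ∈ range k, ENNReal.ofReal (g (u l)) :=
            Finset.measurable_prod _ fun l _ =>
              ENNReal.measurable_ofReal.comp (hgmeas.comp (measurable_pi_apply l))
          have hφ : Measurable (Set.indicator ({k} : Set ℕ) (1 : ℕ → ENNReal)) :=
            measurable_one.indicator (measurableSet_singleton k)
          have hindk : IndepFun
              (fun ω => Set.indicator ({k} : Set ℕ) (1 : ℕ → ENNReal) (N ω))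
              (fun ω => ∏ l ∈ range k, W l ω) μ := by
            exact hNU.comp (φ := Set.indicator ({k} : Set ℕ) (1 : ℕ → ENNReal))
              (ψ := fun u : ℕ → ℝ => ∏ l ∈ range k, ENNReal.ofReal (g (u l))) hφ hψ
          have hmul := lintegral_mul_eq_lintegral_mul_lintegral_of_indepFun
            (μ := μ)
            (f := fun ω => Set.indicator ({k} : Set ℕ) (1 : ℕ → ENNReal) (N ω))
            (g := fun ω => ∏ l ∈ range k, W l ω)
            (hφ.comp hNmeas) (hprodmeas k) hindk
          rw [show (fun ω => Set.indicator ({k} : Set ℕ) (1 : ℕ → ENNReal) (N ω))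
              * (fun ω => ∏ l ∈ range k, W l ω)
              = fun ω => (Set.indicator ({k} : Set ℕ) (1 : ℕ → ENNReal) (N ω))
                * ∏ l ∈ range k, W l ω from rfl] at hmul
          rw [hmul]
          congr 1
          · -- ∫⁻ indicator = poisson pmf
            have h1 : (fun ω => Set.indicator ({k} : Set ℕ) (1 : ℕ → ENNReal) (N ω))
                = Set.indicator {ω' | N ω' = k} (1 : Ω → ENNReal) := by
              funext ω
              by_cases h : N ω = k <;> simp [Set.indicator, Set.mem_setOf_eq, h]
            rw [h1, lintegral_indicator_one (hAmeas k)]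
            have h2 : μ {ω' | N ω' = k} = (Measure.map N μ) {k} := by
              rw [Measure.map_apply hNmeas (measurableSet_singleton k)]
              rfl
            rw [h2, hNlaw]
            rw [poissonMeasure_singleton]
            rfl
          · -- ∫⁻ product = (ofReal a)^k
            rw [lintegral_prod_range_of_iIndepFun μ W hWmeas hWind k]
            simp [hWint, Finset.prod_const]
    -- the summed series
  have hpmf : ∀ k : ℕ, poissonPMFReal μpar.toNNReal k * a ^ k
      = Real.exp (-μpar) * ((μpar * a) ^ k / k.factorial) := by
    intro k
    have hcoe : ((μpar.toNNReal : ℝ)) = μpar := Real.coe_toNNReal _ hμ.le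
    simp only [poissonPMFReal, hcoe, mul_pow]
    ring
  have hsum : HasSum (fun k : ℕ => poissonPMFReal μpar.toNNReal k * a ^ k)
      (Real.exp (-μpar) * Real.exp (μpar * a)) := by
    have h1 := NormedSpace.expSeries_div_hasSum_exp (μpar * a)
    rw [← Real.exp_eq_exp_ℝ] at h1
    have h2 := h1.mul_left (Real.exp (-μpar))
    rw [funext hpmf]
    exact h2
  have hLsum : (∑' k : ℕ, ENNReal.ofReal (poissonPMFReal μpar.toNNReal k)
      * (ENNReal.ofReal a) ^ k)
      = ENNReal.ofReal (Real.exp (-μpar) * Real.exp (μpar * a)) := by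
    have : ∀ k : ℕ, ENNReal.ofReal (poissonPMFReal μpar.toNNReal k)
        * (ENNReal.ofReal a) ^ k
        = ENNReal.ofReal (poissonPMFReal μpar.toNNReal k * a ^ k) := by
      intro k
      rw [← ENNReal.ofReal_pow ha0, ← ENNReal.ofReal_mul poissonPMFReal_nonneg]
    rw [tsum_congr this, ← hsum.tsum_eq]
    exact (ENNReal.ofReal_tsum_of_nonneg
      (fun k => mul_nonneg poissonPMFReal_nonneg (pow_nonneg ha0 k))
      hsum.summable).symm
  -- main product P and its measurability
  have hPmeas : Measurable fun ω => ∏ l ∈ range (N ω), g (U l ω) := by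
    have houter : Measurable fun p : (ℕ → ℝ) × ℕ => ∏ l ∈ range p.2, g (p.1 l) := by
      apply measurable_from_prod_countable_left
      intro k
      show Measurable fun u : ℕ → ℝ => ∏ l ∈ range k, g (u l)
      exact Finset.measurable_prod _ fun l _ => hgmeas.comp (measurable_pi_apply l)
    exact houter.comp ((measurable_pi_lambda _ fun l => hUmeas l).prodMk hNmeas)
  have hP0 : ∀ ω, 0 ≤ ∏ l ∈ range (N ω), g (U l ω) := fun ω =>
    Finset.prod_nonneg fun l _ => hg0 _
  -- putting it together
  have hmain : ∫ ω, ∏ l ∈ range (N ω), g (U l ω) ∂μ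
      = Real.exp (-μpar) * Real.exp (μpar * a) := by
    rw [integral_eq_lintegral_of_nonneg_ae (ae_of_all _ hP0) hPmeas.aestronglyMeasurable]
    have : ∀ ω, ENNReal.ofReal (∏ l ∈ range (N ω), g (U l ω))
        = ∏ l ∈ range (N ω), W l ω := by
      intro ω
      exact ENNReal.ofReal_prod_of_nonneg fun l _ => hg0 _
    rw [lintegral_congr this, hL, hLsum, ENNReal.toReal_ofReal
      (mul_nonneg (Real.exp_nonneg _) (Real.exp_nonneg _))]
  have hμa : μpar * a = b * t - I := by
    rw [ha]; field_simp
  calc ∫ ω, Real.exp (μpar - b * t) * ∏ l ∈ range (N ω), (t / μpar) * (b - f (U l ω)) ∂μ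
      = Real.exp (μpar - b * t) * ∫ ω, ∏ l ∈ range (N ω), g (U l ω) ∂μ := by
        rw [← integral_const_mul]
    _ = Real.exp (μpar - b * t) * (Real.exp (-μpar) * Real.exp (μpar * a)) := by rw [hmain]
    _ = Real.exp (-I) := by
        rw [hμa, ← Real.exp_add, ← Real.exp_add]
        ring_nf
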